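/- Let R be an integral domain of finite transcendence degree over a field k of characteristic zero, and let B = R[X₁, …, X_n] be the polynomial ring in n variables over R. Let G be a totally ordered abelian group, choose (d₁, …, d_n) ∈ Gⁿ, and endow B with the G-grading in which the nonzero elements of R are homogeneous of degree 0 and each Xᵢ is homogeneous of degree dᵢ. Let deg : B → G ∪ {−∞} be the degree function determined by this grading. Then deg is tame over k. More precisely, if z₁, …, z_m ∈ R are such that R is algebraic over k[z₁, …, z_m], then for every k-derivation D : B → B, deg(D) is defined and deg(D) = max{δ_D(z₁), …, δ_D(z_m), δ_D(X₁), …, δ_D(X_n)}. -/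

import Mathlib

section DegreePrelude

variable {B : Type*} [CommRing B] {G : Type*} [AddCommGroup G] [LinearOrder G] [IsOrderedAddMonoid G]

/-- A degree function on `B` with values in `G ∪ {-∞}` -/
def IsDegreeFunction (deg : B → WithBot G) : Prop :=
  (∀ x : B, deg x = ⊥ ↔ x = 0) ∧
  (∀ x y : B, deg (x * y) = deg x + deg y) ∧
  (∀ x y : B, deg (x + y) ≤ max (deg x) (deg y))

/-- `degDelta deg D x = deg (D x) - deg x` (with value `-∞` if `D x = 0`). -/
noncomputable def degDelta (deg : B → WithBot G) (D : B → B) (x : B) : WithBot G :=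
  (deg (D x)).map fun a => a - (deg x).unbotD 0

/-- The set `{deg (D x) - deg x : x ∈ B \ {0}}`. -/
def degDeltaSet (deg : B → WithBot G) (D : B → B) : Set (WithBot G) :=
  {m | ∃ x : B, x ≠ 0 ∧ degDelta deg D x = m}

/-- `deg (D)` is defined, i.e. the set `{deg (D x) - deg x : x ≠ 0}` has a
greatest element in `G ∪ {-∞}`. -/
def DegreeDefinedAt (deg : B → WithBot G) (D : B → B) : Prop :=
  ∃ M, IsGreatest (degDeltaSet deg D) M

end DegreePrelude


set_option linter.unusedSectionVars false
namespace Stmt13Aux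
open MvPolynomial

variable {R : Type*} [CommRing R] [IsDomain R] {G : Type*} [AddCommGroup G] [LinearOrder G] [IsOrderedAddMonoid G]
variable {n : ℕ} {d : Fin n → G} {deg : MvPolynomial (Fin n) R → WithBot G}

abbrev mwt (d : Fin n → G) (mo : Fin n →₀ ℕ) : G := ∑ i, mo i • d i

lemma mwt_zero : mwt d 0 = 0 := by simp [mwt]

lemma mwt_add (a b : Fin n →₀ ℕ) : mwt d (a + b) = mwt d a + mwt d b := by
  simp [mwt, add_smul, Finset.sum_add_distrib]

lemma mwt_single (a : Fin n) (b : ℕ) : mwt d (Finsupp.single a b) = b • d a := by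
  rw [mwt, Finset.sum_eq_single a]
  · simp
  · intro j _ hj; simp [Finsupp.single_apply, Ne.symm hj]
  · simp

section degfacts

variable (hdeg0 : deg 0 = ⊥)
variable (hdeg : ∀ p : MvPolynomial (Fin n) R, p ≠ 0 →
      (∀ mo ∈ p.support, ((mwt d mo : G) : WithBot G) ≤ deg p) ∧
      (∃ mo ∈ p.support, deg p = ((mwt d mo : G) : WithBot G)))

include hdeg0 hdeg

lemma deg_ne_bot {p : MvPolynomial (Fin n) R} (hp : p ≠ 0) : deg p ≠ ⊥ := by
  obtain ⟨mo, _, hval⟩ := (hdeg p hp).2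
  rw [hval]; exact WithBot.coe_ne_bot

lemma deg_eq_of_support_eq {p q : MvPolynomial (Fin n) R} (h : p.support = q.support) :
    deg p = deg q := by
  by_cases hp : p = 0
  · have : q = 0 := by
      rw [← MvPolynomial.support_eq_empty, ← h, hp]; simp
    rw [hp, this]
  · have hq : q ≠ 0 := by
      intro h0; apply hp
      rw [← MvPolynomial.support_eq_empty, h, h0]; simp
    apply le_antisymm
    · obtain ⟨mo, hmo, hval⟩ := (hdeg p hp).2
      rw [hval]; exact (hdeg q hq).1 mo (h ▸ hmo)
    · obtain ⟨mo, hmo, hval⟩ := (hdeg q hq).2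
      rw [hval]; exact (hdeg p hp).1 mo (h ▸ hmo)

lemma deg_C {r : R} (hr : r ≠ 0) : deg (C r : MvPolynomial (Fin n) R) = 0 := by
  have hC : (C r : MvPolynomial (Fin n) R) ≠ 0 := fun h => hr (C_injective (Fin n) R (h.trans (map_zero (C : R →+* MvPolynomial (Fin n) R)).symm))
  obtain ⟨mo, hmo, hval⟩ := (hdeg _ hC).2
  have : mo = 0 := by
    classical
    have := hmo
    rw [MvPolynomial.C_apply, MvPolynomial.support_monomial, if_neg hr] at this
    simpa using this
  rw [hval, this]
  simp [mwt]

lemma deg_C_le (r : R) : deg (C r : MvPolynomial (Fin n) R) ≤ 0 := by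
  by_cases hr : r = 0
  · simp [hr, hdeg0]
  · rw [deg_C hdeg0 hdeg hr]

lemma deg_monomial_le (mo : Fin n →₀ ℕ) (c : R) :
    deg (monomial mo c) ≤ ((mwt d mo : G) : WithBot G) := by
  classical
  by_cases hc : c = 0
  · simp [hc, hdeg0]
  · have hne : (monomial mo c : MvPolynomial (Fin n) R) ≠ 0 := by
      simp [MvPolynomial.monomial_eq_zero, hc]
    obtain ⟨mo', hmo', hval⟩ := (hdeg _ hne).2
    rw [MvPolynomial.support_monomial, if_neg hc] at hmo'
    rw [hval, Finset.mem_singleton.mp hmo']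

lemma deg_X_le (i : Fin n) : deg (X i : MvPolynomial (Fin n) R) ≤ ((d i : G) : WithBot G) := by
  have := deg_monomial_le hdeg0 hdeg (Finsupp.single i 1) (1 : R)
  rw [← MvPolynomial.X_pow_eq_monomial, pow_one] at this
  simpa [mwt_single] using this

lemma deg_add_le (p q : MvPolynomial (Fin n) R) : deg (p + q) ≤ max (deg p) (deg q) := by
  classical
  by_cases h : p + q = 0
  · simp [h, hdeg0]
  · obtain ⟨mo, hmo, hval⟩ := (hdeg _ h).2
    have hmem := Finset.mem_union.mp (MvPolynomial.support_add hmo)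
    rw [hval]
    rcases hmem with hm | hm
    · have hp : p ≠ 0 := fun h0 => by simp [h0] at hm
      exact le_trans ((hdeg p hp).1 mo hm) (le_max_left _ _)
    · have hq : q ≠ 0 := fun h0 => by simp [h0] at hm
      exact le_trans ((hdeg q hq).1 mo hm) (le_max_right _ _)

lemma deg_sum_le {ι : Type*} (s : Finset ι) (f : ι → MvPolynomial (Fin n) R) (c : WithBot G)
    (h : ∀ i ∈ s, deg (f i) ≤ c) : deg (∑ i ∈ s, f i) ≤ c := by
  classical
  induction s using Finset.induction_on with
  | empty => simp [hdeg0]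
  | insert _ _ hni ih =>
    rename_i a s
    rw [Finset.sum_insert hni]
    refine le_trans (deg_add_le hdeg0 hdeg _ _) (max_le ?_ ?_)
    · exact h a (Finset.mem_insert_self _ _)
    · exact ih fun i hi => h i (Finset.mem_insert_of_mem hi)

lemma deg_mul_le (p q : MvPolynomial (Fin n) R) : deg (p * q) ≤ deg p + deg q := by
  classical
  by_cases h : p * q = 0
  · simp [h, hdeg0]
  · obtain ⟨mo, hmo, hval⟩ := (hdeg _ h).2
    obtain ⟨a, ha, b, hb, hab⟩ := Finset.mem_add.mp (MvPolynomial.support_mul p q hmo)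
    have hp : p ≠ 0 := fun h0 => by simp [h0] at ha
    have hq : q ≠ 0 := fun h0 => by simp [h0] at hb
    rw [hval, ← hab, mwt_add, WithBot.coe_add]
    exact add_le_add ((hdeg p hp).1 a ha) ((hdeg q hq).1 b hb)

lemma deg_C_mul {r : R} (hr : r ≠ 0) (p : MvPolynomial (Fin n) R) : deg (C r * p) = deg p := by
  apply deg_eq_of_support_eq hdeg0 hdeg
  ext mo
  simp [MvPolynomial.mem_support_iff, MvPolynomial.coeff_C_mul, hr]

lemma deg_neg (p : MvPolynomial (Fin n) R) : deg (-p) = deg p := by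
  apply deg_eq_of_support_eq hdeg0 hdeg
  exact MvPolynomial.support_neg (Fin n)

end degfacts

/-- Derivation applied to a polynomial evaluation. -/
lemma deriv_eval {k B : Type*} [CommRing k] [CommRing B] [Algebra k B]
    (D : Derivation k B B) (q : Polynomial B) (b : B) :
    D (q.eval b) = (Polynomial.derivative q).eval b * D b
      + q.sum (fun i a => D a * b ^ i) := by
  induction q using Polynomial.induction_on' with
  | add p q hp hq =>
    rw [Polynomial.eval_add, map_add, hp, hq, map_add, Polynomial.eval_add,
      Polynomial.sum_add_index _ _ _ (fun i => by simp) (fun a b₁ b₂ => by rw [map_add, add_mul])]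
    ring
  | monomial m a =>
    rw [Polynomial.eval_monomial, Polynomial.derivative_monomial, Polynomial.eval_monomial,
      Polynomial.sum_monomial_index _ _ (by simp),
      D.leibniz, D.leibniz_pow, smul_eq_mul, smul_eq_mul, smul_eq_mul, nsmul_eq_mul]
    ring


section main

variable {k : Type*} [Field k] [CharZero k] [Algebra k R]

lemma wb_shuffle (M : WithBot G) (x y : G) :
    (x : WithBot G) + (M + (y : WithBot G)) = M + (((x + y : G)) : WithBot G) := by
  rw [WithBot.coe_add, ← add_assoc, add_comm (x : WithBot G) M, add_assoc]

lemma nsmul_pred {b : ℕ} (hb : b ≠ 0) (g : G) : (b - 1) • g + g = b • g := by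
  have hb1 : b - 1 + 1 = b := Nat.succ_pred_eq_of_pos (Nat.pos_of_ne_zero hb)
  calc (b - 1) • g + g = (b - 1 + 1) • g := (succ_nsmul g (b - 1)).symm
    _ = b • g := by rw [hb1]

variable (hdeg0 : deg 0 = ⊥)
variable (hdeg : ∀ p : MvPolynomial (Fin n) R, p ≠ 0 →
      (∀ mo ∈ p.support, ((mwt d mo : G) : WithBot G) ≤ deg p) ∧
      (∃ mo ∈ p.support, deg p = ((mwt d mo : G) : WithBot G)))

include hdeg0 hdeg in
set_option synthInstance.maxHeartbeats 1000000 in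
theorem key (m : ℕ) (z : Fin m → R)
    (hz : ∀ r : R, IsAlgebraic (↥(Algebra.adjoin k (Set.range z))) r)
    (D : Derivation k (MvPolynomial (Fin n) R) (MvPolynomial (Fin n) R)) :
    IsGreatest (degDeltaSet deg ⇑D)
      ((Finset.univ.sup fun j => degDelta deg ⇑D (C (z j))) ⊔
        (Finset.univ.sup fun i => degDelta deg ⇑D (X i))) := by
  classical
  haveI : CharZero R := charZero_of_injective_algebraMap (algebraMap k R).injective
  set M := (Finset.univ.sup fun j => degDelta deg ⇑D (C (z j))) ⊔
      (Finset.univ.sup fun i => degDelta deg ⇑D (X i)) with hMdef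
  have degD_le : ∀ x : MvPolynomial (Fin n) R, x ≠ 0 →
      deg (D x) ≤ degDelta deg ⇑D x + deg x := by
    intro x hx
    obtain ⟨g, hg⟩ := WithBot.ne_bot_iff_exists.mp (deg_ne_bot hdeg0 hdeg hx)
    by_cases hDx : D x = 0
    · rw [hDx, hdeg0]; exact bot_le
    · obtain ⟨h, hh⟩ := WithBot.ne_bot_iff_exists.mp (deg_ne_bot hdeg0 hdeg hDx)
      rw [degDelta, ← hg, ← hh, WithBot.map_coe, WithBot.unbotD_coe, ← WithBot.coe_add,
        sub_add_cancel]
  have hXM : ∀ i, degDelta deg ⇑D (X i : MvPolynomial (Fin n) R) ≤ M := by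
    intro i
    rw [hMdef]
    exact le_trans (Finset.le_sup (f := fun i => degDelta deg ⇑D (X i : MvPolynomial (Fin n) R))
      (Finset.mem_univ i)) le_sup_right
  have hzM : ∀ j, degDelta deg ⇑D (C (z j) : MvPolynomial (Fin n) R) ≤ M := by
    intro j
    rw [hMdef]
    exact le_trans (Finset.le_sup (f := fun j => degDelta deg ⇑D (C (z j) : MvPolynomial (Fin n) R))
      (Finset.mem_univ j)) le_sup_left
  have hDX : ∀ i, deg (D (X i)) ≤ M + ((d i : G) : WithBot G) := by
    intro i
    refine le_trans (degD_le _ (MvPolynomial.X_ne_zero i)) ?_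
    exact add_le_add (hXM i) (deg_X_le hdeg0 hdeg i)
  have hCsub : ∀ r ∈ Algebra.adjoin k (Set.range z),
      deg (D (C r : MvPolynomial (Fin n) R)) ≤ M := by
    intro r hr
    let S : Subalgebra k R :=
      { carrier := {r : R | deg (D (C r : MvPolynomial (Fin n) R)) ≤ M}
        one_mem' := by
          simp only [Set.mem_setOf_eq, map_one, Derivation.map_one_eq_zero, hdeg0]
          exact bot_le
        zero_mem' := by
          simp only [Set.mem_setOf_eq, map_zero, hdeg0]
          exact bot_le
        add_mem' := by
          intro a b ha hb
          simp only [Set.mem_setOf_eq] at *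
          rw [map_add, map_add]
          exact le_trans (deg_add_le hdeg0 hdeg _ _) (max_le ha hb)
        mul_mem' := by
          intro a b ha hb
          simp only [Set.mem_setOf_eq] at *
          rw [map_mul, D.leibniz, smul_eq_mul, smul_eq_mul]
          refine le_trans (deg_add_le hdeg0 hdeg _ _) (max_le ?_ ?_)
          · refine le_trans (deg_mul_le hdeg0 hdeg _ _) ?_
            calc deg (C a : MvPolynomial (Fin n) R) + deg (D (C b)) ≤ 0 + M :=
                  add_le_add (deg_C_le hdeg0 hdeg a) hb
              _ = M := zero_add M
          · refine le_trans (deg_mul_le hdeg0 hdeg _ _) ?_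
            calc deg (C b : MvPolynomial (Fin n) R) + deg (D (C a)) ≤ 0 + M :=
                  add_le_add (deg_C_le hdeg0 hdeg b) ha
              _ = M := zero_add M
        algebraMap_mem' := by
          intro c
          simp only [Set.mem_setOf_eq]
          have hmapeq : (C (algebraMap k R c) : MvPolynomial (Fin n) R)
              = algebraMap k (MvPolynomial (Fin n) R) c := rfl
          rw [hmapeq, Derivation.map_algebraMap, hdeg0]
          exact bot_le }
    have hsub : Algebra.adjoin k (Set.range z) ≤ S := by
      apply Algebra.adjoin_le
      rintro _ ⟨j, rfl⟩
      show deg (D (C (z j) : MvPolynomial (Fin n) R)) ≤ M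
      by_cases hzj : z j = 0
      · rw [hzj, map_zero, map_zero, hdeg0]; exact bot_le
      · refine le_trans (degD_le _ ?_) ?_
        · exact fun h => hzj (C_injective (Fin n) R
            (h.trans (map_zero (C : R →+* MvPolynomial (Fin n) R)).symm))
        · rw [deg_C hdeg0 hdeg hzj, add_zero]
          exact hzM j
    exact hsub hr
  have hCr : ∀ r : R, deg (D (C r : MvPolynomial (Fin n) R)) ≤ M := by
    intro r
    set A' := Algebra.adjoin k (Set.range z) with hA'
    have hex : ∃ N : ℕ, ∃ p : Polynomial ↥A',
        p ≠ 0 ∧ Polynomial.aeval r p = 0 ∧ p.natDegree = N := by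
      obtain ⟨p, hp0, hpr⟩ := hz r
      exact ⟨p.natDegree, p, hp0, hpr, rfl⟩
    obtain ⟨p, hp0, hev, hpN⟩ := Nat.find_spec hex
    have hmin : ∀ q : Polynomial ↥A', q ≠ 0 → Polynomial.aeval r q = 0 →
        Nat.find hex ≤ q.natDegree := fun q h1 h2 => Nat.find_min' hex ⟨q, h1, h2, rfl⟩
    haveI : CharZero ↥A' := charZero_of_injective_algebraMap (algebraMap k ↥A').injective
    have hvaleq : (algebraMap ↥A' R) = A'.val := rfl
    have hvalinj : Function.Injective (algebraMap ↥A' R) := by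
      rw [hvaleq]; exact Subtype.val_injective
    set P := p.map (algebraMap ↥A' R) with hP
    have hPr : P.eval r = 0 := by
      rw [hP, Polynomial.eval_map, ← Polynomial.aeval_def, hev]
    have hpd : p.natDegree ≠ 0 := by
      intro h
      obtain ⟨a, ha⟩ := Polynomial.natDegree_eq_zero.mp h
      rw [← ha, Polynomial.aeval_C] at hev
      have ha0 : a = 0 := hvalinj (by simpa using hev)
      exact hp0 (by rw [← ha, ha0, map_zero])
    have hder0 : Polynomial.derivative p ≠ 0 := fun h =>
      hpd (Polynomial.natDegree_eq_zero_of_derivative_eq_zero h)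
    have hs : (Polynomial.derivative P).eval r ≠ 0 := by
      intro h
      rw [hP, Polynomial.derivative_map, Polynomial.eval_map, ← Polynomial.aeval_def] at h
      have h1 := hmin _ hder0 h
      have h2 := Polynomial.natDegree_derivative_lt hpd
      omega
    set s := (Polynomial.derivative P).eval r with hsdef
    set Q := P.map (C : R →+* MvPolynomial (Fin n) R) with hQ
    have hQ0 : Q.eval (C r) = 0 := by
      rw [hQ, Polynomial.eval_map, Polynomial.eval₂_hom, hPr, map_zero]
    have hD0 := deriv_eval D Q (C r : MvPolynomial (Fin n) R)
    rw [hQ0, map_zero] at hD0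
    have hQC : (Polynomial.derivative Q).eval (C r : MvPolynomial (Fin n) R) = C s := by
      rw [hQ, Polynomial.derivative_map, Polynomial.eval_map, Polynomial.eval₂_hom, hsdef]
    have heq : (C s : MvPolynomial (Fin n) R) * D (C r)
        = -(Q.sum fun i a => D a * (C r : MvPolynomial (Fin n) R) ^ i) := by
      rw [← hQC]
      exact eq_neg_of_add_eq_zero_left hD0.symm
    calc deg (D (C r : MvPolynomial (Fin n) R))
        = deg ((C s : MvPolynomial (Fin n) R) * D (C r)) := (deg_C_mul hdeg0 hdeg hs _).symm
      _ = deg (Q.sum fun i a => D a * (C r : MvPolynomial (Fin n) R) ^ i) := by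
          rw [heq, deg_neg hdeg0 hdeg]
      _ ≤ M := by
          rw [Polynomial.sum_def]
          apply deg_sum_le hdeg0 hdeg
          intro i _
          refine le_trans (deg_mul_le hdeg0 hdeg _ _) ?_
          have h1 : deg (D (Q.coeff i)) ≤ M := by
            rw [hQ, Polynomial.coeff_map, hP, Polynomial.coeff_map, hvaleq]
            exact hCsub _ (p.coeff i).2
          have h2 : deg ((C r : MvPolynomial (Fin n) R) ^ i) ≤ 0 := by
            rw [← map_pow]; exact deg_C_le hdeg0 hdeg _
          calc deg (D (Q.coeff i)) + deg ((C r : MvPolynomial (Fin n) R) ^ i)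
              ≤ M + 0 := add_le_add h1 h2
            _ = M := add_zero M
  have hKM : ∀ (mo : Fin n →₀ ℕ) (c : R),
      deg (D (monomial mo c)) ≤ M + ((mwt d mo : G) : WithBot G) := by
    intro mo c
    induction mo using Finsupp.induction with
    | zero =>
      rw [MvPolynomial.monomial_zero', mwt_zero, WithBot.coe_zero, add_zero]
      exact hCr c
    | single_add a b f haf hb ih =>
      have hsplit : (monomial (Finsupp.single a b + f) c : MvPolynomial (Fin n) R)
          = X a ^ b * monomial f c := by
        rw [MvPolynomial.X_pow_eq_monomial, MvPolynomial.monomial_mul, one_mul]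
      rw [hsplit, D.leibniz, smul_eq_mul, smul_eq_mul]
      have hXpow : ∀ e : ℕ, deg ((X a : MvPolynomial (Fin n) R) ^ e)
          ≤ ((e • d a : G) : WithBot G) := by
        intro e
        rw [MvPolynomial.X_pow_eq_monomial]
        simpa [mwt_single] using deg_monomial_le hdeg0 hdeg (Finsupp.single a e) (1 : R)
      refine le_trans (deg_add_le hdeg0 hdeg _ _) (max_le ?_ ?_)
      · refine le_trans (deg_mul_le hdeg0 hdeg _ _) ?_
        calc deg ((X a : MvPolynomial (Fin n) R) ^ b) + deg (D (monomial f c))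
            ≤ ((b • d a : G) : WithBot G) + (M + ((mwt d f : G) : WithBot G)) :=
              add_le_add (hXpow b) ih
          _ = M + ((mwt d (Finsupp.single a b + f) : G) : WithBot G) := by
              rw [wb_shuffle, mwt_add, mwt_single]
      · have hb1 : deg (D ((X a : MvPolynomial (Fin n) R) ^ b))
            ≤ M + ((b • d a : G) : WithBot G) := by
          rw [D.leibniz_pow, smul_eq_mul, nsmul_eq_mul,
            show ((b : MvPolynomial (Fin n) R)) = C ((b : R)) by
              rw [map_natCast (C : R →+* MvPolynomial (Fin n) R)],
            deg_C_mul hdeg0 hdeg (Nat.cast_ne_zero.mpr hb)]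
          refine le_trans (deg_mul_le hdeg0 hdeg _ _) ?_
          calc deg ((X a : MvPolynomial (Fin n) R) ^ (b - 1)) + deg (D (X a))
              ≤ (((b - 1) • d a : G) : WithBot G) + (M + ((d a : G) : WithBot G)) :=
                add_le_add (hXpow (b - 1)) (hDX a)
            _ = M + ((b • d a : G) : WithBot G) := by rw [wb_shuffle, nsmul_pred hb]
        refine le_trans (deg_mul_le hdeg0 hdeg _ _) ?_
        calc deg (monomial f c : MvPolynomial (Fin n) R)
              + deg (D ((X a : MvPolynomial (Fin n) R) ^ b))
            ≤ ((mwt d f : G) : WithBot G) + (M + ((b • d a : G) : WithBot G)) :=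
              add_le_add (deg_monomial_le hdeg0 hdeg f c) hb1
          _ = M + ((mwt d (Finsupp.single a b + f) : G) : WithBot G) := by
              rw [wb_shuffle, mwt_add, mwt_single, add_comm (mwt d f) (b • d a)]
  have hmain : ∀ x : MvPolynomial (Fin n) R, deg (D x) ≤ M + deg x := by
    intro x
    by_cases hx : x = 0
    · rw [hx, map_zero, hdeg0]; exact bot_le
    · have hx2 : D x = ∑ mo ∈ x.support, D (monomial mo (MvPolynomial.coeff mo x)) := by
        conv_lhs => rw [← MvPolynomial.support_sum_monomial_coeff x]
        rw [map_sum]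
      rw [hx2]
      apply deg_sum_le hdeg0 hdeg
      intro mo hmo
      exact le_trans (hKM mo _) (add_le_add le_rfl ((hdeg x hx).1 mo hmo))
  constructor
  · by_cases hMbot : M = ⊥
    · refine ⟨1, one_ne_zero, ?_⟩
      rw [hMbot]
      simp [degDelta, Derivation.map_one_eq_zero, hdeg0]
    · rcases le_total (Finset.univ.sup fun j => degDelta deg ⇑D (C (z j)))
        (Finset.univ.sup fun i => degDelta deg ⇑D (X i)) with h | h
      · have hM2 : M = (Finset.univ.sup fun i => degDelta deg ⇑D (X i)) := by
          rw [hMdef]; exact sup_eq_right.mpr h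
        have hne : (Finset.univ : Finset (Fin n)).Nonempty := by
          by_contra hne
          rw [Finset.not_nonempty_iff_eq_empty] at hne
          apply hMbot
          rw [hM2, hne, Finset.sup_empty]
        obtain ⟨i, _, hi⟩ := Finset.exists_mem_eq_sup Finset.univ hne
          (fun i => degDelta deg ⇑D (X i : MvPolynomial (Fin n) R))
        refine ⟨X i, MvPolynomial.X_ne_zero i, ?_⟩
        rw [hM2, hi]
      · have hM1 : M = (Finset.univ.sup fun j => degDelta deg ⇑D (C (z j))) := by
          rw [hMdef]; exact sup_eq_left.mpr h
        have hne : (Finset.univ : Finset (Fin m)).Nonempty := by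
          by_contra hne
          rw [Finset.not_nonempty_iff_eq_empty] at hne
          apply hMbot
          rw [hM1, hne, Finset.sup_empty]
        obtain ⟨j, _, hj⟩ := Finset.exists_mem_eq_sup Finset.univ hne
          (fun j => degDelta deg ⇑D (C (z j) : MvPolynomial (Fin n) R))
        by_cases hzj : z j = 0
        · exfalso
          apply hMbot
          rw [hM1, hj, hzj, map_zero]
          simp [degDelta, hdeg0]
        · refine ⟨C (z j), fun hc => hzj (C_injective (Fin n) R
            (hc.trans (map_zero (C : R →+* MvPolynomial (Fin n) R)).symm)), ?_⟩
          rw [hM1, hj]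
  · rintro e ⟨x, hx, rfl⟩
    obtain ⟨g, hg⟩ := WithBot.ne_bot_iff_exists.mp (deg_ne_bot hdeg0 hdeg hx)
    by_cases hDx : D x = 0
    · rw [degDelta, hDx, hdeg0]
      exact bot_le
    · obtain ⟨h2, hh⟩ := WithBot.ne_bot_iff_exists.mp (deg_ne_bot hdeg0 hdeg hDx)
      have hb := hmain x
      rw [← hh, ← hg] at hb
      rw [degDelta, ← hg, ← hh, WithBot.map_coe, WithBot.unbotD_coe]
      by_cases hMb : M = ⊥
      · rw [hMb, WithBot.bot_add] at hb
        exact absurd hb (by simp)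
      · obtain ⟨mg, hmg⟩ := WithBot.ne_bot_iff_exists.mp hMb
        rw [← hmg, ← WithBot.coe_add, WithBot.coe_le_coe] at hb
        rw [← hmg]
        exact WithBot.coe_le_coe.mpr (sub_le_iff_le_add.mpr hb)

end main
end Stmt13Aux

theorem stmt13 {k R G : Type*} [Field k] [CharZero k] [CommRing R] [IsDomain R]
    [Algebra k R] [AddCommGroup G] [LinearOrder G] [IsOrderedAddMonoid G]
    -- R has finite transcendence degree over k
    (htrdeg : ∃ (N : ℕ) (w : Fin N → R), ∀ r : R,
      IsAlgebraic (↥(Algebra.adjoin k (Set.range w))) r)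
    (n : ℕ) (d : Fin n → G)
    -- deg is the degree function determined by the grading of R[X₁,…,Xₙ] in which
    -- nonzero elements of R have degree 0 and Xᵢ has degree dᵢ
    (deg : MvPolynomial (Fin n) R → WithBot G)
    (hdeg0 : deg 0 = ⊥)
    (hdeg : ∀ p : MvPolynomial (Fin n) R, p ≠ 0 →
      (∀ mo ∈ p.support, ((∑ i : Fin n, mo i • d i : G) : WithBot G) ≤ deg p) ∧
      (∃ mo ∈ p.support, deg p = ((∑ i : Fin n, mo i • d i : G) : WithBot G))) :
    -- deg is tame over k:
    (∀ D : Derivation k (MvPolynomial (Fin n) R) (MvPolynomial (Fin n) R),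
      DegreeDefinedAt deg ⇑D) ∧
    -- more precisely:
    (∀ (m : ℕ) (z : Fin m → R),
      (∀ r : R, IsAlgebraic (↥(Algebra.adjoin k (Set.range z))) r) →
      ∀ D : Derivation k (MvPolynomial (Fin n) R) (MvPolynomial (Fin n) R),
        IsGreatest (degDeltaSet deg ⇑D)
          ((Finset.univ.sup fun j => degDelta deg ⇑D (MvPolynomial.C (z j))) ⊔
            (Finset.univ.sup fun i => degDelta deg ⇑D (MvPolynomial.X i)))) := by
  constructor
  · intro D
    obtain ⟨N, w, hw⟩ := htrdeg
    exact ⟨_, Stmt13Aux.key hdeg0 hdeg N w hw D⟩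
  · intro m z hzalg D
    exact Stmt13Aux.key hdeg0 hdeg m z hzalg D
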